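/- Let T be a finite tree with at least two vertices and let v be a vertex of T. Then the third power T³ contains a Hamiltonian path one of whose endpoints is v and whose other endpoint is a neighbour of v in T. -/

import Mathlib

open SimpleGraph

/-- The `k`-th power of a graph `G`: same vertex set, and distinct vertices are adjacent
iff their graph distance in `G` is at most `k`. -/
def graphPow {V : Type*} (G : SimpleGraph V) (k : ℕ) : SimpleGraph V where
  Adj u v := u ≠ v ∧ G.edist u v ≤ k
  symm := by
    constructor
    intro u v h
    exact ⟨h.1.symm, by rw [SimpleGraph.edist_comm]; exact h.2⟩
  loopless := ⟨fun u h => h.1 rfl⟩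

section Aux

variable {V W : Type*}

lemma reachable_of_mem_support' {G : SimpleGraph V} {a b x : V} (p : G.Walk a b)
    (hx : x ∈ p.support) : G.Reachable a x := by
  induction p with
  | nil => rw [Walk.support_nil, List.mem_singleton] at hx; subst hx; rfl
  | cons h q ih =>
    rw [Walk.support_cons, List.mem_cons] at hx
    rcases hx with rfl | hx
    · rfl
    · exact h.reachable.trans (ih hx)

lemma induce_reachable_of_walk {G H : SimpleGraph V} (hHG : H ≤ G) {A : Set V} :
    ∀ {a b : V} (p : H.Walk a b) (ha : a ∈ A) (hb : b ∈ A)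
      (_ : ∀ x ∈ p.support, x ∈ A),
    (G.induce A).Reachable ⟨a, ha⟩ ⟨b, hb⟩ := by
  intro a b p
  induction p with
  | nil => intro _ _ _; rfl
  | @cons a c b h q ih =>
    intro ha hb hp
    have hc : c ∈ A := hp c (by simp)
    have hadj : (G.induce A).Adj ⟨a, ha⟩ ⟨c, hc⟩ := hHG h
    exact hadj.reachable.trans (ih hc hb (fun x hx => hp x (by simp [hx])))

lemma edist_map_le {H : SimpleGraph V} {G : SimpleGraph W} (f : H →g G) (a b : V) :
    G.edist (f a) (f b) ≤ H.edist a b := by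
  rcases eq_or_ne (H.edist a b) ⊤ with h | h
  · simp [h]
  · obtain ⟨p, hp⟩ := exists_walk_of_edist_ne_top h
    calc G.edist (f a) (f b) ≤ (p.map f).length := edist_le _
      _ = p.length := by rw [Walk.length_map]
      _ = H.edist a b := hp

/-- An injective graph hom induces a hom of graph powers. -/
def powHom {H : SimpleGraph V} {G : SimpleGraph W} (f : H →g G)
    (hf : Function.Injective f) (k : ℕ) : graphPow H k →g graphPow G k where
  toFun := f
  map_rel' := fun {a b} h => (⟨fun he => h.1 (hf he), le_trans (edist_map_le f a b) h.2⟩ :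
    f a ≠ f b ∧ G.edist (f a) (f b) ≤ k)

end Aux

universe u

lemma tree_cube_ham : ∀ (n : ℕ) (V : Type u) [Fintype V] [DecidableEq V]
    (T : SimpleGraph V), Fintype.card V ≤ n → T.IsTree → ∀ v : V,
    ∃ x, T.edist v x ≤ 1 ∧ ∃ p : (graphPow T 3).Walk v x, p.IsHamiltonian := by
  intro n
  induction n with
  | zero =>
    intro V _ _ T hcard hT v
    have : 0 < Fintype.card V := Fintype.card_pos_iff.mpr ⟨v⟩
    omega
  | succ n ih =>
    intro V _ _ T hcard hT v
    by_cases hsing : ∀ y : V, y = v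
    · refine ⟨v, by simp [SimpleGraph.edist_self], Walk.nil, fun a => ?_⟩
      rw [hsing a]; simp
    · push_neg at hsing
      obtain ⟨y, hy⟩ := hsing
      obtain ⟨q⟩ := hT.isConnected.preconnected v y
      obtain ⟨w, h, -⟩ : ∃ w, T.Adj v w ∧ True := by
        cases q with
        | nil => exact (hy rfl).elim
        | cons h q => exact ⟨_, h, trivial⟩
      clear hy q y
      set G' : SimpleGraph V := T \ fromEdgeSet {s(v, w)} with hG'
      have hG'le : G' ≤ T := sdiff_le
      have hbridge : ¬ G'.Reachable v w := by
        have hb := (isAcyclic_iff_forall_adj_isBridge.mp hT.IsAcyclic) h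
        exact isBridge_iff.mp hb
      set A : Set V := {x | G'.Reachable v x} with hA
      set B : Set V := {x | G'.Reachable w x} with hB
      have hvA : v ∈ A := Reachable.refl v
      have hwB : w ∈ B := Reachable.refl w
      have hdisj : ∀ x, x ∈ A → x ∈ B → False := fun x hxA hxB => hbridge (hxA.trans hxB.symm)
      have hcover : ∀ x, x ∈ A ∨ x ∈ B := by
        have key : ∀ {a c : V} (p : T.Walk a c), a ∈ A ∨ a ∈ B → c ∈ A ∨ c ∈ B := by
          intro a c p
          induction p with
          | nil => exact id
          | @cons a d c hadj q ih2 =>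
            intro ha
            refine ih2 ?_
            by_cases he : s(a, d) = s(v, w)
            · rw [Sym2.eq_iff] at he
              rcases he with ⟨rfl, rfl⟩ | ⟨rfl, rfl⟩
              · exact Or.inr hwB
              · exact Or.inl hvA
            · have hadj' : G'.Adj a d := by
                rw [hG', sdiff_adj]
                exact ⟨hadj, by simp [fromEdgeSet_adj, he]⟩
              rcases ha with ha | ha
              · exact Or.inl (Reachable.trans ha hadj'.reachable)
              · exact Or.inr (Reachable.trans ha hadj'.reachable)
        intro x
        obtain ⟨p⟩ := hT.isConnected.preconnected v x
        exact key p (Or.inl hvA)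
      letI : DecidablePred (· ∈ A) := Classical.decPred _
      letI : DecidablePred (· ∈ B) := Classical.decPred _
      have hwA : w ∉ A := fun hw' => hdisj w hw' hwB
      have hvB : v ∉ B := fun hv' => hdisj v hvA hv'
      have cardA : Fintype.card A ≤ n := by
        have h1 : Fintype.card ↥A < Fintype.card V := Fintype.card_subtype_lt (x := w) hwA
        omega
      have cardB : Fintype.card B ≤ n := by
        have h1 : Fintype.card ↥B < Fintype.card V := Fintype.card_subtype_lt (x := v) hvB
        omega
      have mkTree : ∀ (S : Set V) (s : V) (hs : s ∈ S),
          (∀ x ∈ S, G'.Reachable s x) → (∀ x, G'.Reachable s x → x ∈ S) →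
          (T.induce S).IsTree := by
        intro S s hs hreach hclosed
        constructor
        · haveI : Nonempty ↥S := ⟨⟨s, hs⟩⟩
          refine ⟨?_⟩
          rintro ⟨x, hx⟩ ⟨z, hz⟩
          obtain ⟨p⟩ := (hreach x hx).symm.trans (hreach z hz)
          refine induce_reachable_of_walk hG'le p hx hz ?_
          intro t ht
          exact hclosed t ((hreach x hx).trans (reachable_of_mem_support' p ht))
        · intro u c hc
          exact hT.IsAcyclic _ (hc.map (f := (SimpleGraph.Embedding.induce S).toHom)
            Subtype.val_injective)
      have treeA : (T.induce A).IsTree :=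
        mkTree A v hvA (fun x hx => hx) (fun x hx => hx)
      have treeB : (T.induce B).IsTree :=
        mkTree B w hwB (fun x hx => hx) (fun x hx => hx)
      obtain ⟨x', hx'd, pA, hpA⟩ := ih ↥A (T.induce A) cardA treeA ⟨v, hvA⟩
      obtain ⟨y', hy'd, pB, hpB⟩ := ih ↥B (T.induce B) cardB treeB ⟨w, hwB⟩
      have fAinj : Function.Injective ⇑((SimpleGraph.Embedding.induce (G := T) A).toHom) :=
        Subtype.val_injective
      have fBinj : Function.Injective ⇑((SimpleGraph.Embedding.induce (G := T) B).toHom) :=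
        Subtype.val_injective
      let fA : graphPow (T.induce A) 3 →g graphPow T 3 :=
        powHom (SimpleGraph.Embedding.induce A).toHom fAinj 3
      let fB : graphPow (T.induce B) 3 →g graphPow T 3 :=
        powHom (SimpleGraph.Embedding.induce B).toHom fBinj 3
      have hdvx : T.edist v ↑x' ≤ 1 :=
        le_trans (edist_map_le (SimpleGraph.Embedding.induce A).toHom ⟨v, hvA⟩ x') hx'd
      have hdwy : T.edist w ↑y' ≤ 1 :=
        le_trans (edist_map_le (SimpleGraph.Embedding.induce B).toHom ⟨w, hwB⟩ y') hy'd
      have hjump : (graphPow T 3).Adj ↑x' ↑y' := by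
        refine (⟨fun hEq => hdisj ↑x' x'.2 (hEq ▸ y'.2), ?_⟩ :
          (↑x' : V) ≠ ↑y' ∧ T.edist ↑x' ↑y' ≤ ((3 : ℕ) : ℕ∞))
        have h1 : T.edist ↑x' v ≤ 1 := by rwa [SimpleGraph.edist_comm]
        have h2 : T.edist v w = 1 := edist_eq_one_iff_adj.mpr h
        calc T.edist ↑x' ↑y' ≤ T.edist ↑x' w + T.edist w ↑y' := T.edist_triangle
          _ ≤ (T.edist ↑x' v + T.edist v w) + T.edist w ↑y' :=
              add_le_add_left T.edist_triangle _
          _ ≤ (1 + 1) + 1 := add_le_add (add_le_add h1 h2.le) hdwy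
          _ ≤ ((3 : ℕ) : ℕ∞) := by norm_num
      let pA' : (graphPow T 3).Walk v ↑x' := pA.map fA
      let pB' : (graphPow T 3).Walk w ↑y' := pB.map fB
      let pfinal : (graphPow T 3).Walk v w := pA'.append (Walk.cons hjump pB'.reverse)
      refine ⟨w, le_of_eq (edist_eq_one_iff_adj.mpr h), pfinal, ?_⟩
      intro a
      have hsup : pfinal.support = pA'.support ++ pB'.support.reverse := by
        show (pA'.append (Walk.cons hjump pB'.reverse)).support = _
        rw [Walk.support_append, Walk.support_cons, List.tail_cons, Walk.support_reverse]
      rw [hsup, List.count_append, List.count_reverse]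
      have hsA : pA'.support = pA.support.map Subtype.val := Walk.support_map pA (f := fA)
      have hsB : pB'.support = pB.support.map Subtype.val := Walk.support_map pB (f := fB)
      rcases hcover a with ha | ha
      · have c1 : pA'.support.count a = 1 := by
          rw [hsA]
          have h1 := List.count_map_of_injective pA.support Subtype.val
            Subtype.val_injective ⟨a, ha⟩
          exact h1.trans (by convert hpA ⟨a, ha⟩ using 2 <;> exact lawful_beq_subsingleton _ _)
        have c2 : pB'.support.count a = 0 := by
          rw [hsB, List.count_eq_zero]
          rintro hmem
          obtain ⟨b', _, rfl⟩ := List.mem_map.mp hmem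
          exact hdisj _ ha b'.2
        omega
      · have c1 : pA'.support.count a = 0 := by
          rw [hsA, List.count_eq_zero]
          rintro hmem
          obtain ⟨b', _, rfl⟩ := List.mem_map.mp hmem
          exact hdisj _ b'.2 ha
        have c2 : pB'.support.count a = 1 := by
          rw [hsB]
          have h1 := List.count_map_of_injective pB.support Subtype.val
            Subtype.val_injective ⟨a, ha⟩
          exact h1.trans (by convert hpB ⟨a, ha⟩ using 2 <;> exact lawful_beq_subsingleton _ _)
        omega

/-- If `T` is a finite tree with at least two vertices and `v` is a vertex of `T`, then
`T³` has a Hamiltonian path from `v` to a neighbour of `v` in `T`. -/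
theorem hamiltonian_path_in_cube_of_finite_tree
    {V : Type*} [Fintype V] [DecidableEq V] (T : SimpleGraph V) (hT : T.IsTree)
    (hcard : 2 ≤ Fintype.card V) (v : V) :
    ∃ w : V, T.Adj v w ∧
      ∃ p : (graphPow T 3).Walk v w, p.IsHamiltonian := by
  obtain ⟨x, hd, p, hp⟩ := tree_cube_ham (Fintype.card V) V T le_rfl hT v
  have hne : x ≠ v := by
    rintro rfl
    have hpath : p.IsPath := hp.isPath
    have : (⟨p, hpath⟩ : (graphPow T 3).Path x x) = SimpleGraph.Path.nil :=
      SimpleGraph.Path.loop_eq _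
    have hpnil : p = SimpleGraph.Walk.nil := congrArg Subtype.val this
    obtain ⟨y, hy⟩ := Fintype.exists_ne_of_one_lt_card hcard x
    have := hp y
    rw [hpnil] at this
    simp only [SimpleGraph.Walk.support_nil] at this
    have hy0 : List.count y [x] = 0 := List.count_eq_zero.mpr (by simp [hy])
    omega
  have hadj : T.Adj v x := by
    rw [← SimpleGraph.edist_eq_one_iff_adj]
    refine le_antisymm hd ?_
    exact Order.one_le_iff_pos.mpr (SimpleGraph.edist_pos_of_ne (Ne.symm hne))
  exact ⟨x, hadj, p, hp⟩
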